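/- Let Y1, Y0, X be compact metric spaces with Borel σ-algebras, μ1X and μ0X Borel probability measures on Y1 × X and Y0 × X with the same X-marginal, m1 : Y0 × X → (d_θ × d_θ real matrices) continuous, m2 : Y1 × Y0 × X → ℝ^{d_θ} continuous, with A := ∫ m1 dμ0X invertible. Define s(q) := − inf over μ ∈ M(μ1X, μ0X) of ∫ qᵀ A⁻¹ m2(y1, y0, x) dμ, and let Θ_I := {θ ∈ ℝ^{d_θ} : there exists μ ∈ M(μ1X, μ0X) with ∫ (m1(y0, x) θ + m2(y1, y0, x)) dμ = 0}. Then for every q in the unit sphere of ℝ^{d_θ}, the support function of Θ_I at q equals s(q); that is, sup over θ ∈ Θ_I of ⟨q, θ⟩ = s(q) (Proposition 3). -/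

import Mathlib

open MeasureTheory
open scoped RealInnerProductSpace

/-- The set `M(μ1X, μ0X)` of probability measures on `Y1 × Y0 × X` whose projection on
`(Y1, X)` is `μ1X` and whose projection on `(Y0, X)` is `μ0X`. -/
def MSet {Y1 Y0 X : Type*} [MeasurableSpace Y1] [MeasurableSpace Y0] [MeasurableSpace X]
    (μ1X : Measure (Y1 × X)) (μ0X : Measure (Y0 × X)) :
    Set (Measure (Y1 × Y0 × X)) :=
  {μ | IsProbabilityMeasure μ ∧
    μ.map (fun p => (p.1, p.2.2)) = μ1X ∧ μ.map (fun p => (p.2.1, p.2.2)) = μ0X}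

/-- Proposition 3: the support function of the identified set `Θ_I` at every unit direction `q`
equals `s(q) = − inf_{μ ∈ M(μ1X,μ0X)} ∫ qᵀ A⁻¹ m2 dμ`, where `A = ∫ m1 dμ0X` is invertible
with inverse `Ainv`. -/
theorem support_function_of_identified_set
    {Y1 Y0 X : Type*}
    [MetricSpace Y1] [CompactSpace Y1] [MeasurableSpace Y1] [BorelSpace Y1]
    [MetricSpace Y0] [CompactSpace Y0] [MeasurableSpace Y0] [BorelSpace Y0]
    [MetricSpace X] [CompactSpace X] [MeasurableSpace X] [BorelSpace X]
    (μ1X : Measure (Y1 × X)) (μ0X : Measure (Y0 × X))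
    [IsProbabilityMeasure μ1X] [IsProbabilityMeasure μ0X]
    (hmarg : μ1X.map Prod.snd = μ0X.map Prod.snd)
    {dθ : ℕ}
    (m1 : Y0 × X → (EuclideanSpace ℝ (Fin dθ) →L[ℝ] EuclideanSpace ℝ (Fin dθ)))
    (hm1 : Continuous m1)
    (m2 : Y1 × Y0 × X → EuclideanSpace ℝ (Fin dθ)) (hm2 : Continuous m2)
    (Ainv : EuclideanSpace ℝ (Fin dθ) →L[ℝ] EuclideanSpace ℝ (Fin dθ))
    (hAinv₁ : ∀ v, Ainv ((∫ q, m1 q ∂μ0X) v) = v)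
    (hAinv₂ : ∀ v, (∫ q, m1 q ∂μ0X) (Ainv v) = v) :
    ∀ q : EuclideanSpace ℝ (Fin dθ), ‖q‖ = 1 →
      sSup {r : ℝ | ∃ θ : EuclideanSpace ℝ (Fin dθ),
          (∃ μ ∈ MSet μ1X μ0X, ∫ p, (m1 (p.2.1, p.2.2)) θ + m2 p ∂μ = 0) ∧ r = ⟪q, θ⟫} =
        - sInf {r : ℝ | ∃ μ ∈ MSet μ1X μ0X, r = ∫ p, ⟪q, Ainv (m2 p)⟫ ∂μ} := by
  intro q hq
  have hproj : Measurable (fun p : Y1 × Y0 × X => (p.2.1, p.2.2)) :=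
    (measurable_fst.comp measurable_snd).prodMk (measurable_snd.comp measurable_snd)
  -- integrability of m1 on μ0X
  have hm1int : Integrable m1 μ0X :=
    hm1.integrable_of_hasCompactSupport (HasCompactSupport.of_compactSpace _)
  -- key computations for any μ ∈ MSet
  have key : ∀ μ ∈ MSet μ1X μ0X, ∀ θ : EuclideanSpace ℝ (Fin dθ),
      (∫ p, (m1 (p.2.1, p.2.2)) θ + m2 p ∂μ)
        = (∫ y, m1 y ∂μ0X) θ + ∫ p, m2 p ∂μ := by
    intro μ hμ θ
    haveI : IsProbabilityMeasure μ := hμ.1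
    have hm2i : Integrable m2 μ := hm2.integrable_of_hasCompactSupport (HasCompactSupport.of_compactSpace _)
    have hc1 : Continuous (fun p : Y1 × Y0 × X => (m1 (p.2.1, p.2.2)) θ) :=
      (hm1.comp (continuous_fst.comp continuous_snd |>.prodMk
        (continuous_snd.comp continuous_snd))).clm_apply continuous_const
    have hi1 : Integrable (fun p : Y1 × Y0 × X => (m1 (p.2.1, p.2.2)) θ) μ :=
      hc1.integrable_of_hasCompactSupport (HasCompactSupport.of_compactSpace _)
    rw [integral_add hi1 hm2i]
    congr 1
    have hmap : ∫ p, (m1 (p.2.1, p.2.2)) θ ∂μ = ∫ y, (m1 y) θ ∂μ0X := by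
      rw [← hμ.2.2, integral_map hproj.aemeasurable]
      exact (hm1.clm_apply continuous_const).aestronglyMeasurable
    rw [hmap, ContinuousLinearMap.integral_apply hm1int]
  have key2 : ∀ μ ∈ MSet μ1X μ0X,
      (∫ p, ⟪q, Ainv (m2 p)⟫ ∂μ) = ⟪q, Ainv (∫ p, m2 p ∂μ)⟫ := by
    intro μ hμ
    haveI : IsProbabilityMeasure μ := hμ.1
    have hm2i : Integrable m2 μ := hm2.integrable_of_hasCompactSupport (HasCompactSupport.of_compactSpace _)
    have hAm2i : Integrable (fun p => Ainv (m2 p)) μ := Ainv.integrable_comp hm2i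
    rw [integral_inner hAm2i, Ainv.integral_comp_comm hm2i]
  -- set equality
  have hset : {r : ℝ | ∃ θ : EuclideanSpace ℝ (Fin dθ),
          (∃ μ ∈ MSet μ1X μ0X, ∫ p, (m1 (p.2.1, p.2.2)) θ + m2 p ∂μ = 0) ∧ r = ⟪q, θ⟫}
      = -{r : ℝ | ∃ μ ∈ MSet μ1X μ0X, r = ∫ p, ⟪q, Ainv (m2 p)⟫ ∂μ} := by
    ext r
    simp only [Set.mem_setOf_eq, Set.mem_neg]
    constructor
    · rintro ⟨θ, ⟨μ, hμ, hint⟩, rfl⟩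
      refine ⟨μ, hμ, ?_⟩
      rw [key μ hμ θ] at hint
      have hθ : θ = -(Ainv (∫ p, m2 p ∂μ)) := by
        have := congrArg Ainv (eq_neg_of_add_eq_zero_left hint)
        rw [hAinv₁, map_neg] at this
        exact this
      rw [key2 μ hμ, hθ, inner_neg_right, neg_neg]
    · rintro ⟨μ, hμ, hr⟩
      refine ⟨-(Ainv (∫ p, m2 p ∂μ)), ⟨μ, hμ, ?_⟩, ?_⟩
      · rw [key μ hμ, map_neg, hAinv₂, neg_add_cancel]
      · rw [inner_neg_right, ← key2 μ hμ, ← hr, neg_neg]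
  rw [hset, Real.sInf_def, neg_neg]
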